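/- arXiv:2305.16294 — 2 statements merged into one kernel-verified Lean document; each statement's English description precedes it below -/
import Mathlib

section
/- Fix constants κ ∈ (0,1) and μ ∈ [0,1], and suppose κ·d ≥ 1. Then for any two distinct vertices a, b ∈ [N]: ℙ(a ∈ W and b ∈ W) ≤ N^{−2+2μ}. -/
open MeasureTheory ProbabilityTheory Filter Real

noncomputable section

namespace ERpaper

attribute [local instance] Classical.propDecidable

/-- The simple graph determined by a Boolean adjacency function. -/
def graph {N : ℕ} (a : Fin N → Fin N → Bool) : SimpleGraph (Fin N) where
  Adj x y := x ≠ y ∧ (a x y = true ∨ a y x = true)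
  symm := ⟨fun x y h => ⟨h.1.symm, h.2.symm⟩⟩
  loopless := ⟨fun x h => h.1 rfl⟩

/-- Closed ball of radius `r` around `x` in the graph metric. -/
def gball {N : ℕ} (G : SimpleGraph (Fin N)) (x : Fin N) (r : ℕ) : Set (Fin N) :=
  {y | G.Reachable x y ∧ G.dist x y ≤ r}

/-- Sphere of radius `r` around `x` in the graph metric. -/
def gsphere {N : ℕ} (G : SimpleGraph (Fin N)) (x : Fin N) (r : ℕ) : Set (Fin N) :=
  {y | G.Reachable x y ∧ G.dist x y = r}

/-- Normalized degree `α_x = |S₁(x)|/d`. -/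
def ndeg {N : ℕ} (G : SimpleGraph (Fin N)) (d : ℝ) (x : Fin N) : ℝ :=
  ((gsphere G x 1).ncard : ℝ) / d

/-- Rescaled adjacency matrix `H = A/√d`. -/
def Hmat {N : ℕ} (d : ℝ) (a : Fin N → Fin N → Bool) : Matrix (Fin N) (Fin N) ℝ :=
  Matrix.of fun x y => (if (graph a).Adj x y then (1 : ℝ) else 0) / Real.sqrt d

/-- `M^{(X)}`: the rows and columns indexed by `X` are set to zero. -/
def minor {N : ℕ} (M : Matrix (Fin N) (Fin N) ℝ) (X : Set (Fin N)) :
    Matrix (Fin N) (Fin N) ℝ :=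
  Matrix.of fun x y => if x ∈ X ∨ y ∈ X then 0 else M x y

/-- `M|_X`: the entries outside `X × X` are set to zero. -/
def restr {N : ℕ} (M : Matrix (Fin N) (Fin N) ℝ) (X : Set (Fin N)) :
    Matrix (Fin N) (Fin N) ℝ :=
  Matrix.of fun x y => if x ∈ X ∧ y ∈ X then M x y else 0

/-- The multiset of eigenvalues of a symmetric real matrix. -/
def eigs {N : ℕ} (M : Matrix (Fin N) (Fin N) ℝ) : Multiset ℝ :=
  if h : M.IsHermitian then Finset.univ.val.map h.eigenvalues else 0

/-- `lamK M k` is the `k`-th largest eigenvalue of `M` (`1`-indexed). -/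
def lamK {N : ℕ} (M : Matrix (Fin N) (Fin N) ℝ) (k : ℕ) : ℝ :=
  (((eigs M).sort (· ≤ ·)).reverse).getD (k - 1) 0

def IsEigenpair {N : ℕ} (M : Matrix (Fin N) (Fin N) ℝ) (l : ℝ) (v : Fin N → ℝ) : Prop :=
  v ≠ 0 ∧ M.mulVec v = l • v

def IsEigenvalue {N : ℕ} (M : Matrix (Fin N) (Fin N) ℝ) (l : ℝ) : Prop :=
  ∃ v, IsEigenpair M l v

/-- Euclidean norm on `ℝ^N`. -/
def norm2 {N : ℕ} (v : Fin N → ℝ) : ℝ := Real.sqrt (∑ y, v y ^ 2)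

/-- `Λ(α) = α/√(α-1)`. -/
def Lambda (α : ℝ) : ℝ := α / Real.sqrt (α - 1)

/-- The Erdős–Rényi property: symmetric Boolean adjacency entries that are independent
Bernoulli(p) random variables. -/
structure IsER {Ω : Type*} [MeasurableSpace Ω] (P : Measure Ω) (N : ℕ) (p : ℝ)
    (a : Ω → Fin N → Fin N → Bool) : Prop where
  symm : ∀ ω x y, a ω x y = a ω y x
  loopless : ∀ ω x, a ω x x = false
  meas : ∀ x y, Measurable fun ω => a ω x y
  prob : ∀ x y : Fin N, x ≠ y → P {ω | a ω x y = true} = ENNReal.ofReal p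
  indep : iIndepSet
    (fun e : {q : Fin N × Fin N // q.1 < q.2} => {ω | a ω e.1.1 e.1.2 = true}) P

/-- `α*(μ)`. -/
def alphaStar {Ω : Type*} [MeasurableSpace Ω] (P : Measure Ω) {N : ℕ}
    (a : Ω → Fin N → Fin N → Bool) (d κ μ : ℝ) : ℝ :=
  if h : 0 < N then
    max (sInf {α : ℝ | 0 < α ∧
      (P {ω | α ≤ ndeg (graph (a ω)) d ⟨0, h⟩}).toReal ≤ (N : ℝ) ^ (μ - 1)}) (2 + κ)
  else 2 + κ

/-- `V = {x : α_x ≥ α*(μ)}`. -/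
def Vset {Ω : Type*} [MeasurableSpace Ω] (P : Measure Ω) {N : ℕ}
    (a : Ω → Fin N → Fin N → Bool) (d κ μ : ℝ) (ω : Ω) : Set (Fin N) :=
  {x | alphaStar P a d κ μ ≤ ndeg (graph (a ω)) d x}

/-- `W = {x ∈ V : Λ(α_x) ≥ Λ(α*(μ)) + κ/2}`. -/
def Wset {Ω : Type*} [MeasurableSpace Ω] (P : Measure Ω) {N : ℕ}
    (a : Ω → Fin N → Fin N → Bool) (d κ μ : ℝ) (ω : Ω) : Set (Fin N) :=
  {x | x ∈ Vset P a d κ μ ω ∧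
    Lambda (alphaStar P a d κ μ) + κ / 2 ≤ Lambda (ndeg (graph (a ω)) d x)}

/-- `λ(x) = λ₂(H^{(V∖{x})})`. -/
def lamx {Ω : Type*} [MeasurableSpace Ω] (P : Measure Ω) {N : ℕ}
    (a : Ω → Fin N → Fin N → Bool) (d κ μ : ℝ) (ω : Ω) (x : Fin N) : ℝ :=
  lamK (minor (Hmat d (a ω)) (Vset P a d κ μ ω \ {x})) 2

def bstar : ℝ := 1 / (2 * Real.log 2 - 1)

/-- Unnormalized profile coefficients. -/
def uAux (α : ℝ) : ℕ → ℝ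
  | 0 => 1
  | i + 1 => Real.sqrt (α / (α - 1)) * ((Real.sqrt (α - 1))⁻¹) ^ i

/-- Normalized profile coefficients `u_i(α)` for radius `r`. -/
def uCoef (α : ℝ) (r i : ℕ) : ℝ :=
  uAux α i / Real.sqrt (∑ j ∈ Finset.range r, uAux α j ^ 2)

/-- The localization profile vector `v_r(x)`. -/
def vProfile {N : ℕ} (G : SimpleGraph (Fin N)) (d : ℝ) (x : Fin N) (r : ℕ) :
    Fin N → ℝ :=
  fun y => ∑ i ∈ Finset.range r,
    uCoef (ndeg G d x) r i * Set.indicator (gsphere G x i) (fun _ => (1 : ℝ)) y /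
      Real.sqrt ((gsphere G x i).ncard)

/-- `w` is an ℓ²-normalized top eigenvector of `M` with nonnegative value at `x`. -/
def IsTopEigenvectorProfile {N : ℕ} (M : Matrix (Fin N) (Fin N) ℝ) (x : Fin N)
    (w : Fin N → ℝ) : Prop :=
  IsEigenpair M (lamK M 1) w ∧ norm2 w = 1 ∧ 0 ≤ w x

/-- The localization length `ℓ(w)`. -/
def locLength {N : ℕ} (G : SimpleGraph (Fin N)) (w : Fin N → ℝ) : ℝ :=
  ⨅ x : Fin N, ∑ y, (G.dist x y : ℝ) * w y ^ 2

/-- The diameter of a graph (maximal diameter of its connected components). -/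
def gdiam {N : ℕ} (G : SimpleGraph (Fin N)) : ℕ :=
  (Finset.univ ×ˢ Finset.univ).sup fun p : Fin N × Fin N => G.dist p.1 p.2


section Aux17

/-! ### Binomial tail recursion -/

/-- `bino p n k` is `ℙ(Bin(n,p) ≥ k)`. -/
def bino (p : ℝ) : ℕ → ℕ → ℝ
  | 0, k => if k = 0 then 1 else 0
  | n + 1, k => p * bino p n (k - 1) + (1 - p) * bino p n k

lemma bino_succ (p : ℝ) (n k : ℕ) :
    bino p (n + 1) k = p * bino p n (k - 1) + (1 - p) * bino p n k := rfl

lemma bino_nonneg {p : ℝ} (h0 : 0 ≤ p) (h1 : p ≤ 1) : ∀ n k, 0 ≤ bino p n k := by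
  intro n
  induction n with
  | zero => intro k; unfold bino; split <;> norm_num
  | succ n ih =>
    intro k
    have h2 := ih (k - 1); have h3 := ih k
    unfold bino; nlinarith

lemma bino_anti {p : ℝ} (h0 : 0 ≤ p) (h1 : p ≤ 1) :
    ∀ n k l, k ≤ l → bino p n l ≤ bino p n k := by
  intro n
  induction n with
  | zero =>
    intro k l hkl
    unfold bino
    split_ifs with hl hk hk
    · exact le_refl 1
    · omega
    · norm_num
    · exact le_refl 0
  | succ n ih =>
    intro k l hkl
    unfold bino
    have h2 := ih (k - 1) (l - 1) (by omega)
    have h3 := ih k l hkl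
    nlinarith

lemma bino_mono_n {p : ℝ} (h0 : 0 ≤ p) (h1 : p ≤ 1) {n m : ℕ} (hnm : n ≤ m) (k : ℕ) :
    bino p n k ≤ bino p m k := by
  induction m with
  | zero =>
    have : n = 0 := by omega
    simp [this]
  | succ m ih =>
    rcases Nat.lt_or_ge n (m + 1) with h | h
    · have h4 : bino p n k ≤ bino p m k := ih (by omega)
      have h5 : bino p m k ≤ bino p m (k - 1) := bino_anti h0 h1 m (k - 1) k (by omega)
      calc bino p n k ≤ bino p m k := h4
        _ ≤ bino p (m + 1) k := by rw [bino_succ]; nlinarith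
    · have : n = m + 1 := by omega
      simp [this]

/-! ### The elementary `Λ` slope bound -/

lemma lambda_gap {s t : ℝ} (hs : 2 ≤ s) (hst : s ≤ t) :
    Lambda t - Lambda s ≤ (t - s) / 4 := by
  have hs1 : (1 : ℝ) ≤ s - 1 := by linarith
  have ht1 : (1 : ℝ) ≤ t - 1 := by linarith
  set u := Real.sqrt (s - 1) with hu_def
  set v := Real.sqrt (t - 1) with hv_def
  have hu : 1 ≤ u := Real.one_le_sqrt.mpr hs1
  have hv : 1 ≤ v := Real.one_le_sqrt.mpr ht1
  have huv : u ≤ v := Real.sqrt_le_sqrt (by linarith)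
  have hu0 : 0 < u := by linarith
  have hv0 : 0 < v := by linarith
  have hs' : s = u ^ 2 + 1 := by
    rw [hu_def, Real.sq_sqrt (by linarith)]; ring
  have ht' : t = v ^ 2 + 1 := by
    rw [hv_def, Real.sq_sqrt (by linarith)]; ring
  have key : 4 * (u * v) - 4 ≤ u * v * (u + v) := by
    nlinarith [mul_nonneg (sub_nonneg.mpr hu) (sub_nonneg.mpr hv), sq_nonneg (u + v - 8/3),
      mul_pos hu0 hv0, sq_nonneg (u - v), sq_nonneg (u * v - 2)]
  have hgoal : (v ^ 2 + 1) / v - (u ^ 2 + 1) / u ≤ ((v ^ 2 + 1) - (u ^ 2 + 1)) / 4 := by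
    rw [div_sub_div _ _ (ne_of_gt hv0) (ne_of_gt hu0), div_le_div_iff₀ (by positivity) (by norm_num)]
    nlinarith [mul_nonneg (sub_nonneg.mpr huv) (mul_pos hu0 hv0).le, key,
      mul_nonneg (sub_nonneg.mpr huv) (sub_nonneg.mpr (by nlinarith : (4:ℝ) ≤ u * v * (u + v) - (4 * (u * v) - 4) + 4 * (u*v) - 4 + 4 - (4 * (u*v) - 4) - (4 - 4)))] 
  unfold Lambda
  rw [← hu_def, ← hv_def] at *
  calc t / v - s / u = (v ^ 2 + 1) / v - (u ^ 2 + 1) / u := by rw [hs', ht']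
    _ ≤ ((v ^ 2 + 1) - (u ^ 2 + 1)) / 4 := hgoal
    _ = (t - s) / 4 := by rw [hs', ht']

/-! ### Counting events over independent edge indicators -/

variable {Ω : Type*}

/-- The event that edge `i` is present. -/
def sev {N : ℕ} (a : Ω → Fin N → Fin N → Bool) (i : {q : Fin N × Fin N // q.1 < q.2}) :
    Set Ω := {ω | a ω i.1.1 i.1.2 = true}

/-- Number of present edges among `F`. -/
def cnt {N : ℕ} (a : Ω → Fin N → Fin N → Bool)
    (F : Finset {q : Fin N × Fin N // q.1 < q.2}) (ω : Ω) : ℕ :=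
  (F.filter fun i => a ω i.1.1 i.1.2 = true).card

lemma cnt_insert {N : ℕ} (a : Ω → Fin N → Fin N → Bool)
    {i : {q : Fin N × Fin N // q.1 < q.2}} {F : Finset {q : Fin N × Fin N // q.1 < q.2}}
    (hiF : i ∉ F) (ω : Ω) :
    cnt a (insert i F) ω = cnt a F ω + (if ω ∈ sev a i then 1 else 0) := by
  unfold cnt
  rw [Finset.filter_insert]
  by_cases h : a ω i.1.1 i.1.2 = true
  · rw [if_pos h, Finset.card_insert_of_notMem (fun hh => hiF (Finset.mem_of_mem_filter _ hh))]
    simp [sev, h]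
  · rw [if_neg h]
    simp [sev, h]

lemma cnt_insert_decomp {N : ℕ} (a : Ω → Fin N → Fin N → Bool)
    {i : {q : Fin N × Fin N // q.1 < q.2}} {F : Finset {q : Fin N × Fin N // q.1 < q.2}}
    (hiF : i ∉ F) (k : ℕ) :
    {ω | k ≤ cnt a (insert i F) ω} =
      (sev a i ∩ {ω | k - 1 ≤ cnt a F ω}) ∪ ((sev a i)ᶜ ∩ {ω | k ≤ cnt a F ω}) := by
  ext ω
  simp only [Set.mem_setOf_eq, Set.mem_union, Set.mem_inter_iff, Set.mem_compl_iff,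
    cnt_insert a hiF]
  by_cases h : ω ∈ sev a i <;> simp only [h, if_true, if_false, not_true, not_false_iff,
    true_and, false_and, and_true, and_false, or_false, false_or] <;> omega

lemma cnt_meas {N : ℕ} (a : Ω → Fin N → Fin N → Bool)
    (F : Finset {q : Fin N × Fin N // q.1 < q.2}) (k : ℕ) :
    MeasurableSet[MeasurableSpace.generateFrom
      {t | ∃ n ∈ (↑F : Set {q : Fin N × Fin N // q.1 < q.2}), sev a n = t}]
      {ω | k ≤ cnt a F ω} := by
  induction F using Finset.induction_on generalizing k with
  | empty =>
    rcases Nat.eq_zero_or_pos k with hk | hk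
    · subst hk
      have : {ω : Ω | 0 ≤ cnt a ∅ ω} = Set.univ := by ext ω; simp
      rw [this]; exact MeasurableSet.univ
    · have : {ω : Ω | k ≤ cnt a ∅ ω} = ∅ := by
        ext ω; simp [cnt]; omega
      rw [this]; exact (MeasurableSpace.measurableSet_empty _)
  | @insert i F hiF ih =>
    rw [cnt_insert_decomp a hiF k]
    have hmono : MeasurableSpace.generateFrom
        {t | ∃ n ∈ (↑F : Set {q : Fin N × Fin N // q.1 < q.2}), sev a n = t} ≤
        MeasurableSpace.generateFrom
        {t | ∃ n ∈ (↑(insert i F) : Set {q : Fin N × Fin N // q.1 < q.2}), sev a n = t} := by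
      apply MeasurableSpace.generateFrom_mono
      rintro t ⟨n, hn, rfl⟩
      exact ⟨n, by simp [hn], rfl⟩
    have hsev : MeasurableSet[MeasurableSpace.generateFrom
        {t | ∃ n ∈ (↑(insert i F) : Set {q : Fin N × Fin N // q.1 < q.2}), sev a n = t}]
        (sev a i) :=
      MeasurableSpace.measurableSet_generateFrom ⟨i, by simp, rfl⟩
    exact ((hsev.inter (hmono _ (ih (k - 1)))).union (hsev.compl.inter (hmono _ (ih k))))

lemma cnt_meas_amb {N : ℕ} [MeasurableSpace Ω] (a : Ω → Fin N → Fin N → Bool)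
    (hm : ∀ i, MeasurableSet (sev a i))
    (F : Finset {q : Fin N × Fin N // q.1 < q.2}) (k : ℕ) :
    MeasurableSet {ω | k ≤ cnt a F ω} := by
  refine MeasurableSpace.generateFrom_le ?_ _ (cnt_meas a F k)
  rintro t ⟨n, _, rfl⟩
  exact hm n

lemma cnt_indep {N : ℕ} [MeasurableSpace Ω] (P : Measure Ω) [IsProbabilityMeasure P]
    (a : Ω → Fin N → Fin N → Bool)
    (hm : ∀ i, MeasurableSet (sev a i))
    (hind : ProbabilityTheory.iIndepSet (sev a) P)
    {F₁ F₂ : Finset {q : Fin N × Fin N // q.1 < q.2}} (hd : Disjoint F₁ F₂) (k l : ℕ) :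
    P ({ω | k ≤ cnt a F₁ ω} ∩ {ω | l ≤ cnt a F₂ ω}) =
      P {ω | k ≤ cnt a F₁ ω} * P {ω | l ≤ cnt a F₂ ω} := by
  have h := hind.indep_generateFrom_of_disjoint hm (↑F₁) (↑F₂)
    (by exact_mod_cast Finset.disjoint_coe.mpr hd)
  exact (ProbabilityTheory.Indep_iff _ _ _).mp h _ _ (cnt_meas a F₁ k) (cnt_meas a F₂ l)

lemma cnt_prob {N : ℕ} [MeasurableSpace Ω] (P : Measure Ω) [IsProbabilityMeasure P]
    (a : Ω → Fin N → Fin N → Bool) {p : ℝ}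
    (hp0 : 0 ≤ p) (hp1 : p ≤ 1)
    (hm : ∀ i, MeasurableSet (sev a i))
    (hind : ProbabilityTheory.iIndepSet (sev a) P)
    (hprob : ∀ i, P (sev a i) = ENNReal.ofReal p)
    (F : Finset {q : Fin N × Fin N // q.1 < q.2}) (k : ℕ) :
    (P {ω | k ≤ cnt a F ω}).toReal = bino p F.card k := by
  induction F using Finset.induction_on generalizing k with
  | empty =>
    rcases Nat.eq_zero_or_pos k with hk | hk
    · subst hk
      have : {ω : Ω | 0 ≤ cnt a ∅ ω} = Set.univ := by ext ω; simp
      rw [this]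
      simp [bino]
    · have : {ω : Ω | k ≤ cnt a ∅ ω} = ∅ := by ext ω; simp [cnt]; omega
      rw [this]
      show _ = bino p 0 k
      unfold bino
      rw [if_neg (by omega)]
      simp
  | @insert i F hiF ih =>
    rw [cnt_insert_decomp a hiF k]
    have hd1 : Disjoint (sev a i ∩ {ω | k - 1 ≤ cnt a F ω})
        ((sev a i)ᶜ ∩ {ω | k ≤ cnt a F ω}) :=
      Set.disjoint_of_subset Set.inter_subset_left Set.inter_subset_left disjoint_compl_right
    have hmeas2 : MeasurableSet ((sev a i)ᶜ ∩ {ω | k ≤ cnt a F ω}) :=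
      (hm i).compl.inter (cnt_meas_amb a hm F k)
    rw [measure_union hd1 hmeas2]
    have hsing : ∀ (B : Set Ω), MeasurableSet[MeasurableSpace.generateFrom
          {t | ∃ n ∈ (↑F : Set {q : Fin N × Fin N // q.1 < q.2}), sev a n = t}] B →
        P (sev a i ∩ B) = P (sev a i) * P B ∧ P ((sev a i)ᶜ ∩ B) = P ((sev a i)ᶜ) * P B := by
      intro B hB
      have h := hind.indep_generateFrom_of_disjoint hm ({i} : Set _) (↑F)
        (by rw [Set.disjoint_singleton_left]; exact_mod_cast hiF)
      have h' := (ProbabilityTheory.Indep_iff _ _ _).mp h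
      have hsevm : MeasurableSet[MeasurableSpace.generateFrom
          {t | ∃ n ∈ ({i} : Set {q : Fin N × Fin N // q.1 < q.2}), sev a n = t}] (sev a i) :=
        MeasurableSpace.measurableSet_generateFrom ⟨i, by simp, rfl⟩
      exact ⟨h' _ _ hsevm hB, h' _ _ hsevm.compl hB⟩
    have e1 := (hsing _ (cnt_meas a F (k - 1))).1
    have e2 := (hsing _ (cnt_meas a F k)).2
    rw [e1, e2]
    have hcompl : P ((sev a i)ᶜ) = ENNReal.ofReal (1 - p) := by
      rw [measure_compl (hm i) (measure_ne_top P _), hprob i, measure_univ]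
      rw [ENNReal.ofReal_sub _ hp0, ENNReal.ofReal_one]
    rw [hprob i, hcompl, ENNReal.toReal_add (by finiteness) (by finiteness),
      ENNReal.toReal_mul, ENNReal.toReal_mul, ENNReal.toReal_ofReal hp0,
      ENNReal.toReal_ofReal (by linarith), ih (k - 1), ih k,
      Finset.card_insert_of_notMem hiF]
    rfl

/-! ### Edge-set counting around a vertex -/

lemma card_incid {N : ℕ} (x : Fin N) (Q : Fin N → Prop) :
    (Finset.univ.filter fun i : {q : Fin N × Fin N // q.1 < q.2} =>
      (i.1.1 = x ∧ Q i.1.2) ∨ (i.1.2 = x ∧ Q i.1.1)).card =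
    (Finset.univ.filter fun z => z ≠ x ∧ Q z).card := by
  classical
  have pe : ∀ (i1 i2 : {q : Fin N × Fin N // q.1 < q.2}),
      i1.1.1 = i2.1.1 → i1.1.2 = i2.1.2 → i1 = i2 := by
    intro i1 i2 h h'
    apply Subtype.ext
    exact Prod.ext h h'
  refine Finset.card_bij (fun i _ => if i.1.1 = x then i.1.2 else i.1.1) ?_ ?_ ?_
  · intro i hi
    rcases (Finset.mem_filter.mp hi).2 with ⟨h1, h2⟩ | ⟨h1, h2⟩
    · rw [if_pos h1]
      refine Finset.mem_filter.mpr ⟨Finset.mem_univ _, ?_, h2⟩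
      have := i.2; rw [h1] at this; exact (ne_of_gt this)
    · have hne : i.1.1 ≠ x := by
        have := i.2; rw [h1] at this; exact ne_of_lt this
      rw [if_neg hne]
      exact Finset.mem_filter.mpr ⟨Finset.mem_univ _, hne, h2⟩
  · intro i1 hi1 i2 hi2 heq
    rcases (Finset.mem_filter.mp hi1).2 with ⟨a1, b1⟩ | ⟨a1, b1⟩ <;>
      rcases (Finset.mem_filter.mp hi2).2 with ⟨a2, b2⟩ | ⟨a2, b2⟩
    · rw [if_pos a1, if_pos a2] at heq
      exact pe _ _ (a1.trans a2.symm) heq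
    · have ne2 : i2.1.1 ≠ x := by
        have := i2.2; rw [a2] at this; exact ne_of_lt this
      rw [if_pos a1, if_neg ne2] at heq
      exfalso
      have h1 : x < i1.1.2 := by have := i1.2; rwa [a1] at this
      have h2 : i2.1.1 < x := by have := i2.2; rwa [a2] at this
      rw [heq] at h1
      exact absurd (h1.trans h2) (lt_irrefl _)
    · have ne1 : i1.1.1 ≠ x := by
        have := i1.2; rw [a1] at this; exact ne_of_lt this
      rw [if_neg ne1, if_pos a2] at heq
      exfalso
      have h1 : i1.1.1 < x := by have := i1.2; rwa [a1] at this
      have h2 : x < i2.1.2 := by have := i2.2; rwa [a2] at this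
      rw [heq] at h1
      exact absurd (h1.trans h2) (lt_irrefl _)
    · have ne1 : i1.1.1 ≠ x := by
        have := i1.2; rw [a1] at this; exact ne_of_lt this
      have ne2 : i2.1.1 ≠ x := by
        have := i2.2; rw [a2] at this; exact ne_of_lt this
      rw [if_neg ne1, if_neg ne2] at heq
      exact pe _ _ heq (a1.trans a2.symm)
  · intro z hz
    obtain ⟨-, hzx, hQ⟩ := Finset.mem_filter.mp hz
    rcases lt_or_gt_of_ne (Ne.symm hzx) with h | h
    · refine ⟨⟨(x, z), h⟩, Finset.mem_filter.mpr ⟨Finset.mem_univ _, Or.inl ⟨rfl, hQ⟩⟩, ?_⟩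
      dsimp only
      rw [if_pos rfl]
    · refine ⟨⟨(z, x), h⟩, Finset.mem_filter.mpr ⟨Finset.mem_univ _, Or.inr ⟨rfl, hQ⟩⟩, ?_⟩
      dsimp only
      rw [if_neg hzx]

lemma cnt_incid {N : ℕ} (a : Ω → Fin N → Fin N → Bool) (ω : Ω)
    (hsym : ∀ u v, a ω u v = a ω v u) (x : Fin N) (Q : Fin N → Prop) :
    cnt a (Finset.univ.filter fun i : {q : Fin N × Fin N // q.1 < q.2} =>
        (i.1.1 = x ∧ Q i.1.2) ∨ (i.1.2 = x ∧ Q i.1.1)) ω =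
      (Finset.univ.filter fun z => z ≠ x ∧ Q z ∧ a ω x z = true).card := by
  classical
  unfold cnt
  rw [Finset.filter_filter]
  have hstep : (Finset.univ.filter fun i : {q : Fin N × Fin N // q.1 < q.2} =>
      ((i.1.1 = x ∧ Q i.1.2) ∨ (i.1.2 = x ∧ Q i.1.1)) ∧ a ω i.1.1 i.1.2 = true) =
      (Finset.univ.filter fun i : {q : Fin N × Fin N // q.1 < q.2} =>
      (i.1.1 = x ∧ (Q i.1.2 ∧ a ω x i.1.2 = true)) ∨
        (i.1.2 = x ∧ (Q i.1.1 ∧ a ω x i.1.1 = true))) := by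
    apply Finset.filter_congr
    intro i _
    constructor
    · rintro ⟨⟨h1, h2⟩ | ⟨h1, h2⟩, h3⟩
      · exact Or.inl ⟨h1, h2, by rwa [h1] at h3⟩
      · exact Or.inr ⟨h1, h2, by rw [hsym] at h3; rwa [h1] at h3⟩
    · rintro (⟨h1, h2, h3⟩ | ⟨h1, h2, h3⟩)
      · exact ⟨Or.inl ⟨h1, h2⟩, by rwa [h1]⟩
      · exact ⟨Or.inr ⟨h1, h2⟩, by rw [hsym]; rwa [h1]⟩
  rw [hstep]
  have hh := card_incid x (fun z => Q z ∧ a ω x z = true)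
  convert hh using 2 <;>
    exact Finset.ext (fun i => by simp only [Finset.mem_filter])

/-! ### Degree description -/

lemma gsphere_one {N : ℕ} (G : SimpleGraph (Fin N)) (x : Fin N) :
    gsphere G x 1 = {z | G.Adj x z} := by
  ext z
  constructor
  · rintro ⟨hr, hd⟩
    exact SimpleGraph.dist_eq_one_iff_adj.mp hd
  · intro h
    exact ⟨h.reachable, SimpleGraph.dist_eq_one_iff_adj.mpr h⟩

lemma ndeg_eq {N : ℕ} (a : Ω → Fin N → Fin N → Bool) (ω : Ω)
    (hsym : ∀ u v, a ω u v = a ω v u) (d : ℝ) (x : Fin N) :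
    ndeg (graph (a ω)) d x =
      ((Finset.univ.filter fun z => z ≠ x ∧ a ω x z = true).card : ℝ) / d := by
  classical
  unfold ndeg
  congr 2
  rw [gsphere_one]
  have : {z | (graph (a ω)).Adj x z} =
      ↑(Finset.univ.filter fun z => z ≠ x ∧ a ω x z = true) := by
    ext z
    simp only [Set.mem_setOf_eq, Finset.coe_filter, Finset.mem_univ, true_and]
    show (x ≠ z ∧ (a ω x z = true ∨ a ω z x = true)) ↔ (z ≠ x ∧ a ω x z = true)
    constructor
    · rintro ⟨h1, h2 | h2⟩
      · exact ⟨Ne.symm h1, h2⟩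
      · exact ⟨Ne.symm h1, by rwa [hsym]⟩
    · rintro ⟨h1, h2⟩
      exact ⟨Ne.symm h1, Or.inl h2⟩
  rw [this, Set.ncard_coe_finset]

/-- Edges containing `x` whose other endpoint satisfies `Q`. -/
def incid {N : ℕ} (x : Fin N) (Q : Fin N → Prop) : Finset {q : Fin N × Fin N // q.1 < q.2} :=
  Finset.univ.filter fun i => (i.1.1 = x ∧ Q i.1.2) ∨ (i.1.2 = x ∧ Q i.1.1)

lemma card_incid' {N : ℕ} (x : Fin N) (Q : Fin N → Prop) :
    (incid x Q).card = (Finset.univ.filter fun z => z ≠ x ∧ Q z).card :=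
  card_incid x Q

lemma cnt_incid' {N : ℕ} (a : Ω → Fin N → Fin N → Bool) (ω : Ω)
    (hsym : ∀ u v, a ω u v = a ω v u) (x : Fin N) (Q : Fin N → Prop) :
    cnt a (incid x Q) ω =
      (Finset.univ.filter fun z => z ≠ x ∧ Q z ∧ a ω x z = true).card :=
  cnt_incid a ω hsym x Q

lemma card_filter_iff {α : Type*} [Fintype α] {p q : α → Prop}
    {ip : DecidablePred p} {iq : DecidablePred q} (h : ∀ z, p z ↔ q z) :
    (@Finset.filter _ p ip Finset.univ).card = (@Finset.filter _ q iq Finset.univ).card := by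
  apply congrArg Finset.card
  apply Finset.ext
  intro z
  simp only [Finset.mem_filter, Finset.mem_univ, true_and]
  exact h z

lemma card_filter_drop {α : Type*} [Fintype α] [DecidableEq α] {p q : α → Prop}
    {ip : DecidablePred p} {iq : DecidablePred q} (y : α) (h : ∀ z, p z → z ≠ y → q z) :
    (@Finset.filter _ p ip Finset.univ).card ≤ (@Finset.filter _ q iq Finset.univ).card + 1 := by
  have hsub : @Finset.filter _ p ip Finset.univ ⊆
      insert y (@Finset.filter _ q iq Finset.univ) := by
    intro z hz
    rw [Finset.mem_filter] at hz
    by_cases hzy : z = y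
    · simp [hzy]
    · exact Finset.mem_insert.mpr (Or.inr (Finset.mem_filter.mpr
        ⟨Finset.mem_univ _, h z hz.2 hzy⟩))
  exact (Finset.card_le_card hsub).trans (Finset.card_insert_le _ _)

lemma card_filter_ne_le {N : ℕ} {p : Fin N → Prop} {ip : DecidablePred p} (x : Fin N)
    (h : ∀ z, p z → z ≠ x) : (@Finset.filter _ p ip Finset.univ).card ≤ N - 1 := by
  have hsub : @Finset.filter _ p ip Finset.univ ⊆ Finset.univ.erase x := by
    intro z hz
    rw [Finset.mem_filter] at hz
    exact Finset.mem_erase.mpr ⟨h z hz.2, Finset.mem_univ _⟩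
  calc (@Finset.filter _ p ip Finset.univ).card ≤ (Finset.univ.erase x).card :=
        Finset.card_le_card hsub
    _ = N - 1 := by
      rw [Finset.card_erase_of_mem (Finset.mem_univ _), Finset.card_univ, Fintype.card_fin]

lemma card_filter_ne_eq {N : ℕ} (x : Fin N) {p : Fin N → Prop} {ip : DecidablePred p}
    (h : ∀ z, p z ↔ z ≠ x) : (@Finset.filter _ p ip Finset.univ).card = N - 1 := by
  have heq : @Finset.filter _ p ip Finset.univ = Finset.univ.erase x := by
    apply Finset.ext
    intro z
    simp only [Finset.mem_filter, Finset.mem_erase, Finset.mem_univ, true_and, and_true]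
    exact h z
  rw [heq, Finset.card_erase_of_mem (Finset.mem_univ _), Finset.card_univ, Fintype.card_fin]


lemma mem_incid {N : ℕ} {x : Fin N} {Q : Fin N → Prop} {i : {q : Fin N × Fin N // q.1 < q.2}} :
    i ∈ incid x Q ↔ (i.1.1 = x ∧ Q i.1.2) ∨ (i.1.2 = x ∧ Q i.1.1) := by
  unfold incid
  simp only [Finset.mem_filter, Finset.mem_univ, true_and]

/-- Canonical neighbour set. -/
def dset {N : ℕ} (a : Ω → Fin N → Fin N → Bool) (ω : Ω) (v : Fin N) : Finset (Fin N) :=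
  Finset.univ.filter fun z => z ≠ v ∧ a ω v z = true

/-- Canonical neighbour set avoiding `w`. -/
def dset2 {N : ℕ} (a : Ω → Fin N → Fin N → Bool) (ω : Ω) (v w : Fin N) : Finset (Fin N) :=
  Finset.univ.filter fun z => z ≠ v ∧ z ≠ w ∧ a ω v z = true

lemma ndeg_eq2 {N : ℕ} (a : Ω → Fin N → Fin N → Bool) (ω : Ω)
    (hsym : ∀ u v, a ω u v = a ω v u) (d : ℝ) (v : Fin N) :
    ndeg (graph (a ω)) d v = ((dset a ω v).card : ℝ) / d := by
  rw [ndeg_eq a ω hsym d v]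
  congr 1

lemma cnt_incid2 {N : ℕ} (a : Ω → Fin N → Fin N → Bool) (ω : Ω)
    (hsym : ∀ u v, a ω u v = a ω v u) (v w : Fin N) :
    cnt a (incid v (fun z => z ≠ w)) ω = (dset2 a ω v w).card := by
  rw [cnt_incid' a ω hsym v (fun z => z ≠ w)]
  refine card_filter_iff ?_
  exact fun z => Iff.rfl

lemma cnt_incid0 {N : ℕ} (a : Ω → Fin N → Fin N → Bool) (ω : Ω)
    (hsym : ∀ u v, a ω u v = a ω v u) (v : Fin N) :
    cnt a (incid v (fun _ => True)) ω = (dset a ω v).card := by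
  rw [cnt_incid' a ω hsym v (fun _ => True)]
  refine card_filter_iff ?_
  exact fun z => by tauto

lemma dset_drop {N : ℕ} (a : Ω → Fin N → Fin N → Bool) (ω : Ω) (v w : Fin N) :
    (dset a ω v).card ≤ (dset2 a ω v w).card + 1 := by
  refine card_filter_drop w ?_
  exact fun z hz hzw => ⟨hz.1, hzw, hz.2⟩

lemma dset_card_le {N : ℕ} (a : Ω → Fin N → Fin N → Bool) (ω : Ω) (v : Fin N) :
    (dset a ω v).card ≤ N := by
  refine (Finset.card_filter_le _ _).trans ?_
  rw [Finset.card_univ, Fintype.card_fin]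

end Aux17

theorem statement17
    {Ω : Type*} [MeasurableSpace Ω] (P : Measure Ω) [IsProbabilityMeasure P]
    (N : ℕ) (d : ℝ) (hd : 0 < d) (hdN : d ≤ N)
    (a : Ω → Fin N → Fin N → Bool) (hER : IsER P N (d / N) a)
    (κ μ : ℝ) (hκ : κ ∈ Set.Ioo (0:ℝ) 1) (hμ : μ ∈ Set.Icc (0:ℝ) 1) (hκd : 1 ≤ κ * d)
    (x y : Fin N) (hxy : x ≠ y) :
    (P {ω | x ∈ Wset P a d κ μ ω ∧ y ∈ Wset P a d κ μ ω}).toReal ≤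
      (N : ℝ) ^ (-2 + 2 * μ) := by
  classical
  obtain ⟨hκ0, hκ1⟩ := hκ
  have hN : 0 < N := x.pos
  have hNR : (0:ℝ) < N := by exact_mod_cast hN
  set v0 : Fin N := ⟨0, hN⟩ with hv0_def
  set p := d / N with hp_def
  have hp0 : 0 ≤ p := by positivity
  have hp1 : p ≤ 1 := by rw [hp_def, div_le_one hNR]; exact hdN
  have hm : ∀ i : {q : Fin N × Fin N // q.1 < q.2}, MeasurableSet (sev a i) := by
    intro i
    have : sev a i = (fun ω => a ω i.1.1 i.1.2) ⁻¹' {true} := rfl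
    rw [this]
    exact hER.meas _ _ (measurableSet_singleton true)
  have hprob : ∀ i, P (sev a i) = ENNReal.ofReal p := fun i => hER.prob _ _ (ne_of_lt i.2)
  have hind := hER.indep
  set αs := alphaStar P a d κ μ with hαs_def
  have hαs_eq : αs = max (sInf {α : ℝ | 0 < α ∧
      (P {ω | α ≤ ndeg (graph (a ω)) d ⟨0, hN⟩}).toReal ≤ (N : ℝ) ^ (μ - 1)}) (2 + κ) := by
    rw [hαs_def, alphaStar, dif_pos hN]
  have hαs2 : 2 + κ ≤ αs := hαs_eq ▸ le_max_right _ _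
  set β := αs + κ with hβ_def
  set k := ⌈d * β⌉₊ with hk_def
  set Fx := incid x (fun z => z ≠ y) with hFx_def
  set Fy := incid y (fun z => z ≠ x) with hFy_def
  set F0 := incid v0 (fun _ => True) with hF0_def
  -- Step A : the event forces many `x`-edges avoiding `y` (and symmetrically)
  have hWk : ∀ (v w : Fin N), v ≠ w → ∀ ω, v ∈ Wset P a d κ μ ω →
      k ≤ cnt a (incid v (fun z => z ≠ w)) ω := by
    intro v w hvw ω hv
    have hV : αs ≤ ndeg (graph (a ω)) d v := hv.1
    have hL : Lambda αs + κ / 2 ≤ Lambda (ndeg (graph (a ω)) d v) := hv.2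
    have hgap := lambda_gap (s := αs) (t := ndeg (graph (a ω)) d v) (by linarith) hV
    have hα2 : αs + 2 * κ ≤ ndeg (graph (a ω)) d v := by linarith
    rw [ndeg_eq2 a ω (hER.symm ω) d v, le_div_iff₀ hd] at hα2
    rw [cnt_incid2 a ω (hER.symm ω) v w]
    apply Nat.ceil_le.mpr
    have hdrop := dset_drop a ω v w
    have hdropR : ((dset a ω v).card : ℝ) ≤ ((dset2 a ω v w).card : ℝ) + 1 := by
      exact_mod_cast hdrop
    have hκd' : (1:ℝ) ≤ κ * d := hκd
    have hβd : d * β = d * αs + d * κ := by rw [hβ_def]; ring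
    linarith [hα2, hdropR]
  have hsubev : {ω | x ∈ Wset P a d κ μ ω ∧ y ∈ Wset P a d κ μ ω} ⊆
      {ω | k ≤ cnt a Fx ω} ∩ {ω | k ≤ cnt a Fy ω} := by
    rintro ω ⟨hx, hy⟩
    exact ⟨hWk x y hxy ω hx, hWk y x hxy.symm ω hy⟩
  -- Step B : disjointness and cardinalities of the edge sets
  have hdisj : Disjoint Fx Fy := by
    rw [Finset.disjoint_left]
    intro i hiX hiY
    rw [hFx_def, mem_incid] at hiX
    rw [hFy_def, mem_incid] at hiY
    rcases hiX with ⟨h1, h2⟩ | ⟨h1, h2⟩ <;> rcases hiY with ⟨h3, h4⟩ | ⟨h3, h4⟩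
    · exact hxy (h1.symm.trans h3)
    · exact h4 h1
    · exact h4 h1
    · exact hxy (h1.symm.trans h3)
  have hcardFx : Fx.card ≤ N - 1 := by
    rw [hFx_def, card_incid' x (fun z => z ≠ y)]
    refine card_filter_ne_le x ?_
    exact fun z hz => hz.1
  have hcardFy : Fy.card ≤ N - 1 := by
    rw [hFy_def, card_incid' y (fun z => z ≠ x)]
    refine card_filter_ne_le y ?_
    exact fun z hz => hz.1
  have hcardF0 : F0.card = N - 1 := by
    rw [hF0_def, card_incid' v0 (fun _ => True)]
    refine card_filter_ne_eq v0 ?_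
    exact fun z => by tauto
  -- Step C : the degree event at vertex 0
  have hset : {ω | β ≤ ndeg (graph (a ω)) d v0} = {ω | k ≤ cnt a F0 ω} := by
    ext ω
    rw [Set.mem_setOf_eq, Set.mem_setOf_eq, ndeg_eq2 a ω (hER.symm ω) d v0,
      hF0_def, cnt_incid0 a ω (hER.symm ω) v0]
    rw [le_div_iff₀ hd, hk_def, mul_comm β d]
    exact Nat.ceil_le.symm
  -- Step D : the `alphaStar` tail bound
  have hvalle : (P {ω | β ≤ ndeg (graph (a ω)) d v0}).toReal ≤ (N:ℝ) ^ (μ - 1) := by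
    set Sset := {α : ℝ | 0 < α ∧
      (P {ω | α ≤ ndeg (graph (a ω)) d ⟨0, hN⟩}).toReal ≤ (N : ℝ) ^ (μ - 1)} with hS_def
    have hne : Sset.Nonempty := by
      refine ⟨(N:ℝ)/d + 1, by positivity, ?_⟩
      have hempty : {ω | (N:ℝ)/d + 1 ≤ ndeg (graph (a ω)) d ⟨0, hN⟩} = ∅ := by
        ext ω
        simp only [Set.mem_setOf_eq, Set.mem_empty_iff_false, iff_false, not_le]
        rw [ndeg_eq2 a ω (hER.symm ω) d ⟨0, hN⟩]
        have hle : ((dset a ω ⟨0, hN⟩).card : ℝ) ≤ N := by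
          exact_mod_cast dset_card_le a ω ⟨0, hN⟩
        have hdiv : ((dset a ω ⟨0, hN⟩).card : ℝ) / d ≤ (N : ℝ) / d := by gcongr
        linarith
      rw [hempty]
      simp [Real.rpow_nonneg (le_of_lt hNR)]
    have hbdd : BddBelow Sset := ⟨0, fun s hs => le_of_lt hs.1⟩
    have hInf_le : sInf Sset ≤ αs := hαs_eq ▸ le_max_left _ _
    have hlt : sInf Sset < β := lt_of_le_of_lt hInf_le (by rw [hβ_def]; linarith)
    obtain ⟨s, hsS, hsβ⟩ := exists_lt_of_csInf_lt hne hlt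
    have hmono : {ω | β ≤ ndeg (graph (a ω)) d v0} ⊆
        {ω | s ≤ ndeg (graph (a ω)) d ⟨0, hN⟩} := by
      intro ω h
      exact le_trans (le_of_lt hsβ) h
    exact le_trans (ENNReal.toReal_mono (measure_ne_top _ _) (measure_mono hmono)) hsS.2
  -- Step E : put everything together
  have hbin0 : bino p (N - 1) k ≤ (N:ℝ) ^ (μ - 1) := by
    have := cnt_prob P a hp0 hp1 hm hind hprob F0 k
    rw [hcardF0] at this
    rw [← this, ← hset]
    exact hvalle
  have hbx : (P {ω | k ≤ cnt a Fx ω}).toReal ≤ (N:ℝ) ^ (μ - 1) := by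
    rw [cnt_prob P a hp0 hp1 hm hind hprob Fx k]
    exact le_trans (bino_mono_n hp0 hp1 hcardFx k) hbin0
  have hby : (P {ω | k ≤ cnt a Fy ω}).toReal ≤ (N:ℝ) ^ (μ - 1) := by
    rw [cnt_prob P a hp0 hp1 hm hind hprob Fy k]
    exact le_trans (bino_mono_n hp0 hp1 hcardFy k) hbin0
  have hprod := cnt_indep P a hm hind hdisj k k
  calc (P {ω | x ∈ Wset P a d κ μ ω ∧ y ∈ Wset P a d κ μ ω}).toReal
      ≤ (P ({ω | k ≤ cnt a Fx ω} ∩ {ω | k ≤ cnt a Fy ω})).toReal :=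
        ENNReal.toReal_mono (measure_ne_top _ _) (measure_mono hsubev)
    _ = (P {ω | k ≤ cnt a Fx ω}).toReal * (P {ω | k ≤ cnt a Fy ω}).toReal := by
        rw [hprod, ENNReal.toReal_mul]
    _ ≤ (N:ℝ) ^ (μ - 1) * (N:ℝ) ^ (μ - 1) := by
        apply mul_le_mul hbx hby ENNReal.toReal_nonneg (Real.rpow_nonneg (le_of_lt hNR) _)
    _ = (N:ℝ) ^ (-2 + 2 * μ) := by
        rw [← Real.rpow_add hNR]
        congr 1
        ring


end ERpaper
end
end

section
/- Let M be the bounded linear operator on ℓ²(ℕ*) (square-summable real sequences indexed by the positive integers) determined by the adjacency structure of ℕ*, i.e. (M a)_j = a_{j−1} + a_{j+1} with the convention a₀ := 0. Then for every real t > 2, the operator I − t^{−1}·M is invertible, its inverse is given by the norm-convergent Neumann series Σ_{k≥0} t^{−k}·M^k, and for every j ∈ ℕ* one has ⟨e₁, (I − t^{−1}·M)^{−1} e_j⟩ = t·(2/(t + √(t²−4)))^j, where (e_j)_{j∈ℕ*} is the standard orthonormal basis of ℓ²(ℕ*). -/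
open MeasureTheory ProbabilityTheory Filter Real

noncomputable section

namespace ERpaper

attribute [local instance] Classical.propDecidable

open scoped ENNReal

private def Gfun (t s : ℝ) (J n : ℕ) : ℝ :=
  t * s ^ max n J * ((s ^ min n J)⁻¹ - s ^ min n J) / (s⁻¹ - s)

private lemma Gfun_rec (t s : ℝ) (hs0 : 0 < s) (hs1 : s < 1) (hts : t * s = s ^ 2 + 1)
    {J : ℕ} (hJ : 1 ≤ J) {n : ℕ} (hn : 1 ≤ n) :
    Gfun t s J n - t⁻¹ * ((if 1 < n then Gfun t s J (n - 1) else 0) + Gfun t s J (n + 1)) =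
      if n = J then 1 else 0 := by
  have hsne : s ≠ 0 := ne_of_gt hs0
  have hs2 : 1 - s ^ 2 ≠ 0 := by nlinarith
  have hEeq : s⁻¹ - s = (1 - s ^ 2) / s := by field_simp
  have hE : s⁻¹ - s ≠ 0 := by rw [hEeq]; exact div_ne_zero hs2 hsne
  have ht : t = (s ^ 2 + 1) / s := by rw [eq_div_iff hsne]; linarith
  rcases Nat.lt_trichotomy n J with h | h | h
  · rw [if_neg (by omega : ¬ n = J)]
    have hmax : max n J = J := max_eq_right h.le
    have hmax1 : max (n - 1) J = J := max_eq_right (by omega)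
    have hmax2 : max (n + 1) J = J := max_eq_right (by omega)
    have hmin : min n J = n := min_eq_left h.le
    have hmin1 : min (n - 1) J = n - 1 := min_eq_left (by omega)
    have hmin2 : min (n + 1) J = n + 1 := min_eq_left (by omega)
    by_cases h1 : 1 < n
    · obtain ⟨m, rfl⟩ : ∃ m, n = m + 2 := ⟨n - 2, by omega⟩
      simp only [Gfun, hmax, hmax1, hmax2, hmin, hmin1, hmin2, if_pos h1,
        Nat.add_sub_cancel]
      simp only [show m + 2 - 1 = m + 1 by omega]
      rw [ht, hEeq]; field_simp; ring
    · have hn1 : n = 1 := by omega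
      subst hn1
      simp only [Gfun, hmax, hmax2, hmin, hmin2, if_neg h1]
      rw [ht, hEeq]; field_simp; ring
  · subst h
    rw [if_pos rfl]
    have hmax : max n n = n := max_self n
    have hmin : min n n = n := min_self n
    have hmax2 : max (n + 1) n = n + 1 := max_eq_left (by omega)
    have hmin2 : min (n + 1) n = n := min_eq_right (by omega)
    by_cases h1 : 1 < n
    · obtain ⟨m, rfl⟩ : ∃ m, n = m + 2 := ⟨n - 2, by omega⟩
      have hmax1 : max (m + 2 - 1) (m + 2) = m + 2 := max_eq_right (by omega)
      have hmin1 : min (m + 2 - 1) (m + 2) = m + 1 := by omega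
      simp only [Gfun, hmax, hmax1, hmax2, hmin, hmin1, hmin2, if_pos h1,
        Nat.add_sub_cancel]
      rw [ht, hEeq]; field_simp; ring
    · have hn1 : n = 1 := by omega
      subst hn1
      simp only [Gfun, hmax, hmax2, hmin, hmin2, if_neg h1]
      rw [ht, hEeq]; field_simp; ring
  · have h1 : 1 < n := by omega
    rw [if_neg (by omega : ¬ n = J), if_pos h1]
    obtain ⟨m, rfl⟩ : ∃ m, n = m + 1 := ⟨n - 1, by omega⟩
    simp only [Nat.add_sub_cancel]
    have hmax : max (m + 1) J = m + 1 := max_eq_left (by omega)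
    have hmax1 : max m J = m := max_eq_left (by omega)
    have hmax2 : max (m + 1 + 1) J = m + 2 := max_eq_left (by omega)
    have hmin : min (m + 1) J = J := min_eq_right (by omega)
    have hmin1 : min m J = J := min_eq_right (by omega)
    have hmin2 : min (m + 1 + 1) J = J := min_eq_right (by omega)
    simp only [Gfun, hmax, hmax1, hmax2, hmin, hmin1, hmin2]
    have e2 : s ^ (m + 1) = s ^ m * s := pow_succ s m
    have e3 : s ^ (m + 2) = s ^ m * s * s := by rw [pow_succ, pow_succ]
    have htne : t ≠ 0 := by rw [ht]; positivity
    rw [e2, e3]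
    obtain ⟨E, hEdef⟩ : ∃ E, s⁻¹ - s = E := ⟨_, rfl⟩
    rw [hEdef] at hE ⊢
    generalize (s ^ J)⁻¹ - s ^ J = c
    generalize s ^ m = p
    field_simp
    linear_combination (p * c) * hts

private lemma Gfun_bound (t s : ℝ) (ht0 : 0 < t) (hs0 : 0 < s) (hs1 : s < 1) (J n : ℕ) :
    |Gfun t s J n| ≤ t * ((s ^ J)⁻¹ - s ^ J) / (s⁻¹ - s) * s ^ n := by
  have hsne : s ≠ 0 := ne_of_gt hs0
  have hE : 0 < s⁻¹ - s := by
    have : 1 < s⁻¹ := (one_lt_inv₀ hs0).mpr hs1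
    nlinarith
  have hnonneg : ∀ m : ℕ, 0 ≤ (s ^ m)⁻¹ - s ^ m := by
    intro m
    have h1 : s ^ m ≤ 1 := pow_le_one₀ hs0.le hs1.le
    have h2 : 1 ≤ (s ^ m)⁻¹ := (one_le_inv₀ (pow_pos hs0 m)).mpr h1
    linarith
  have hGnn : 0 ≤ Gfun t s J n := by
    apply div_nonneg _ hE.le
    exact mul_nonneg (mul_nonneg ht0.le (pow_nonneg hs0.le _)) (hnonneg _)
  rw [abs_of_nonneg hGnn]
  rcases le_total n J with h | h
  · have hmax : max n J = J := max_eq_right h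
    have hmin : min n J = n := min_eq_left h
    have key : s ^ J * ((s ^ n)⁻¹ - s ^ n) ≤ ((s ^ J)⁻¹ - s ^ J) * s ^ n := by
      have h1 : s ^ J * (s ^ n)⁻¹ ≤ (s ^ J)⁻¹ * s ^ n := by
        rw [← div_eq_mul_inv, inv_mul_eq_div,
          div_le_div_iff₀ (pow_pos hs0 n) (pow_pos hs0 J)]
        exact mul_le_mul (pow_le_pow_of_le_one hs0.le hs1.le h)
          (pow_le_pow_of_le_one hs0.le hs1.le h) (pow_nonneg hs0.le _)
          (pow_nonneg hs0.le _)
      nlinarith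
    calc Gfun t s J n = t / (s⁻¹ - s) * (s ^ J * ((s ^ n)⁻¹ - s ^ n)) := by
          rw [Gfun, hmax, hmin]; ring
      _ ≤ t / (s⁻¹ - s) * (((s ^ J)⁻¹ - s ^ J) * s ^ n) :=
          mul_le_mul_of_nonneg_left key (div_nonneg ht0.le hE.le)
      _ = t * ((s ^ J)⁻¹ - s ^ J) / (s⁻¹ - s) * s ^ n := by ring
  · have hmax : max n J = n := max_eq_left h
    have hmin : min n J = J := min_eq_right h
    rw [Gfun, hmax, hmin]; ring_nf; rfl

private lemma lp_norm_sq' (f : lp (fun _ : ℕ+ => ℝ) 2) : ‖f‖ ^ 2 = ∑' i, (f i) ^ 2 := by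
  have hp : (0:ℝ) < (2:ℝ≥0∞).toReal := by norm_num
  have h := lp.norm_rpow_eq_tsum hp f
  simpa only [ENNReal.toReal_ofNat, Real.rpow_two, Real.norm_eq_abs, sq_abs] using h

private lemma lp_sq_summable' (f : lp (fun _ : ℕ+ => ℝ) 2) :
    Summable (fun i : ℕ+ => (f i) ^ 2) := by
  have hp : (0:ℝ) < (2:ℝ≥0∞).toReal := by norm_num
  have h := lp.memℓp f
  rw [memℓp_gen_iff hp] at h
  simpa only [ENNReal.toReal_ofNat, Real.rpow_two, Real.norm_eq_abs, sq_abs] using h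

private lemma succ_inj : Function.Injective (fun i : ℕ+ => i + 1) := by
  intro a b h
  apply PNat.coe_injective
  have := congrArg (fun x : ℕ+ => (x : ℕ)) h
  simpa using this

private lemma one_lt_succ (i : ℕ+) : 1 < i + 1 := by
  rw [← PNat.coe_lt_coe]
  simp

private lemma succ_sub_one (i : ℕ+) : i + 1 - 1 = i := by
  apply PNat.coe_injective
  rw [PNat.sub_coe, if_pos (one_lt_succ i)]
  simp

private lemma range_succ (x : ℕ+) (hx : 1 < x) : ∃ i : ℕ+, i + 1 = x :=
  ⟨x - 1, by
    apply PNat.coe_injective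
    rw [PNat.add_coe, PNat.sub_coe, if_pos hx]
    have := (PNat.coe_lt_coe 1 x).mpr hx
    simp at this ⊢
    omega⟩

private lemma Mnorm_le (M : lp (fun _ : ℕ+ => ℝ) 2 →L[ℝ] lp (fun _ : ℕ+ => ℝ) 2)
    (hM : ∀ (v : lp (fun _ : ℕ+ => ℝ) 2) (j : ℕ+),
      (M v) j = (if 1 < j then (v (j - 1)) else 0) + v (j + 1)) : ‖M‖ ≤ 2 := by
  refine M.opNorm_le_bound (by norm_num) fun v => ?_
  set R : ℕ+ → ℝ := fun k => if 1 < k then v (k - 1) else 0 with hR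
  set L : ℕ+ → ℝ := fun k => v (k + 1) with hL
  have hv2 : Summable fun i : ℕ+ => (v i) ^ 2 := lp_sq_summable' v
  have hRφ : ∀ i : ℕ+, R (i + 1) = v i := by
    intro i
    simp only [hR, if_pos (one_lt_succ i), succ_sub_one]
  have hL2 : Summable fun k : ℕ+ => (L k) ^ 2 := hv2.comp_injective succ_inj
  have hvanish : ∀ x ∉ Set.range (fun i : ℕ+ => i + 1), R x ^ 2 = 0 := by
    intro x hx
    have : ¬ 1 < x := by
      intro h
      obtain ⟨i, hi⟩ := range_succ x h
      exact hx ⟨i, hi⟩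
    simp [hR, this]
  have hR2 : Summable fun k : ℕ+ => (R k) ^ 2 := by
    rw [← Function.Injective.summable_iff succ_inj hvanish]
    have : ((fun k : ℕ+ => (R k) ^ 2) ∘ fun i : ℕ+ => i + 1) = fun i : ℕ+ => (v i) ^ 2 := by
      funext i
      simp [Function.comp, hRφ i]
    rw [this]
    exact hv2
  have hsupp : Function.support (fun k : ℕ+ => (R k) ^ 2) ⊆
      Set.range (fun i : ℕ+ => i + 1) := by
    intro x hx
    by_contra hxr
    exact hx (hvanish x hxr)
  have hReq : ∑' k : ℕ+, (R k) ^ 2 = ∑' i : ℕ+, (v i) ^ 2 := by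
    rw [← Function.Injective.tsum_eq succ_inj hsupp]
    exact tsum_congr fun i => by simp [hRφ i]
  have hLle : ∑' k : ℕ+, (L k) ^ 2 ≤ ∑' i : ℕ+, (v i) ^ 2 := by
    exact Summable.tsum_le_tsum_of_inj (fun i : ℕ+ => i + 1) succ_inj
      (fun c _ => sq_nonneg _) (fun b => by rw [hL]) hL2 hv2
  have hsumMv : Summable fun k : ℕ+ => ((M v) k) ^ 2 := lp_sq_summable' (M v)
  have hMvk : ∀ k, ((M v) k) ^ 2 = (R k + L k) ^ 2 := fun k => by rw [hM v k]
  have hbound : ∑' k : ℕ+, ((M v) k) ^ 2 ≤ 4 * ∑' i : ℕ+, (v i) ^ 2 := by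
    have h1 : ∑' k : ℕ+, ((M v) k) ^ 2 ≤ ∑' k : ℕ+, (2 * (R k) ^ 2 + 2 * (L k) ^ 2) := by
      apply Summable.tsum_le_tsum _ hsumMv ((hR2.mul_left 2).add (hL2.mul_left 2))
      intro k
      rw [hMvk k]
      nlinarith [sq_nonneg (R k - L k)]
    have h2 : ∑' k : ℕ+, (2 * (R k) ^ 2 + 2 * (L k) ^ 2)
        = 2 * ∑' k : ℕ+, (R k) ^ 2 + 2 * ∑' k : ℕ+, (L k) ^ 2 := by
      rw [Summable.tsum_add (hR2.mul_left 2) (hL2.mul_left 2), tsum_mul_left, tsum_mul_left]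
    calc ∑' k : ℕ+, ((M v) k) ^ 2
        ≤ 2 * ∑' k : ℕ+, (R k) ^ 2 + 2 * ∑' k : ℕ+, (L k) ^ 2 := h1.trans_eq h2
      _ ≤ 4 * ∑' i : ℕ+, (v i) ^ 2 := by rw [hReq]; linarith [hLle]
  have hn1 : ‖M v‖ ^ 2 ≤ 4 * ‖v‖ ^ 2 := by
    rw [lp_norm_sq', lp_norm_sq']
    exact hbound
  nlinarith [norm_nonneg (M v), norm_nonneg v]

set_option maxHeartbeats 1000000 in
theorem statement19
    (M : lp (fun _ : ℕ+ => ℝ) 2 →L[ℝ] lp (fun _ : ℕ+ => ℝ) 2)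
    (hM : ∀ (v : lp (fun _ : ℕ+ => ℝ) 2) (j : ℕ+),
      (M v) j = (if 1 < j then (v (j - 1)) else 0) + v (j + 1)) :
    ∀ t : ℝ, 2 < t →
      ∃ B : lp (fun _ : ℕ+ => ℝ) 2 →L[ℝ] lp (fun _ : ℕ+ => ℝ) 2,
        (1 - t⁻¹ • M) * B = 1 ∧ B * (1 - t⁻¹ • M) = 1 ∧
        HasSum (fun k : ℕ => (t⁻¹ • M) ^ k) B ∧
        ∀ j : ℕ+,
          (inner ℝ (lp.single 2 (1 : ℕ+) (1 : ℝ)) (B (lp.single 2 j (1 : ℝ))) : ℝ) =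
            t * (2 / (t + Real.sqrt (t ^ 2 - 4))) ^ (j : ℕ) := by
  intro t ht
  have ht0 : (0:ℝ) < t := by linarith
  have htne : t ≠ 0 := ne_of_gt ht0
  have hMn : ‖M‖ ≤ 2 := Mnorm_le M hM
  have hlt : ‖t⁻¹ • M‖ < 1 := by
    calc ‖t⁻¹ • M‖ ≤ ‖t⁻¹‖ * ‖M‖ := ContinuousLinearMap.opNorm_smul_le _ _
      _ ≤ t⁻¹ * 2 := by
          rw [Real.norm_eq_abs, abs_of_pos (inv_pos.mpr ht0)]
          exact mul_le_mul_of_nonneg_left hMn (inv_nonneg.mpr ht0.le)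
      _ < 1 := by rw [← div_eq_inv_mul]; exact (div_lt_one ht0).mpr ht
  refine ⟨∑' k : ℕ, (t⁻¹ • M) ^ k, mul_neg_geom_series _ hlt, geom_series_mul_neg _ hlt,
    (summable_geometric_of_norm_lt_one hlt).hasSum, ?_⟩
  intro j
  set s : ℝ := (t - Real.sqrt (t ^ 2 - 4)) / 2 with hsdef
  have h4 : (0:ℝ) < t ^ 2 - 4 := by nlinarith
  have hsqnn : 0 ≤ Real.sqrt (t ^ 2 - 4) := Real.sqrt_nonneg _
  have hsq : Real.sqrt (t ^ 2 - 4) ^ 2 = t ^ 2 - 4 := Real.sq_sqrt h4.le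
  have hsqlt : Real.sqrt (t ^ 2 - 4) < t := by nlinarith
  have hs0 : 0 < s := by rw [hsdef]; linarith
  have hs1 : s < 1 := by
    have h2 : t - 2 < Real.sqrt (t ^ 2 - 4) := by nlinarith
    rw [hsdef]; linarith
  have hts : t * s = s ^ 2 + 1 := by rw [hsdef]; nlinarith
  have hdiv : 2 / (t + Real.sqrt (t ^ 2 - 4)) = s := by
    rw [hsdef, div_eq_iff (by positivity)]; nlinarith
  set J := (j : ℕ) with hJdef
  have hJ : 1 ≤ J := j.property
  have hsne : s ≠ 0 := ne_of_gt hs0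
  have hs2 : (1:ℝ) - s ^ 2 ≠ 0 := by nlinarith
  have hEeq : s⁻¹ - s = (1 - s ^ 2) / s := by field_simp
  have hEpos : 0 < s⁻¹ - s := by
    have : 1 < s⁻¹ := (one_lt_inv₀ hs0).mpr hs1
    nlinarith
  have hE : s⁻¹ - s ≠ 0 := ne_of_gt hEpos
  set g : ℕ+ → ℝ := fun k => Gfun t s J (k : ℕ) with hgdef
  have hgmem : Memℓp g 2 := by
    apply memℓp_gen
    have hp2 : ((2:ℝ≥0∞)).toReal = (2:ℝ) := by norm_num
    set A : ℝ := t * ((s ^ J)⁻¹ - s ^ J) / (s⁻¹ - s) with hA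
    have hsJ : s ^ J ≤ 1 := pow_le_one₀ hs0.le hs1.le
    have hsJi : 1 ≤ (s ^ J)⁻¹ := (one_le_inv₀ (pow_pos hs0 J)).mpr hsJ
    have hAnn : 0 ≤ A := by
      apply div_nonneg _ hEpos.le
      exact mul_nonneg ht0.le (by linarith)
    have hsum : Summable (fun i : ℕ+ => A ^ 2 * (s ^ 2) ^ (i : ℕ)) := by
      have hgeo : Summable (fun n : ℕ => A ^ 2 * (s ^ 2) ^ n) :=
        (summable_geometric_of_lt_one (by positivity) (by nlinarith)).mul_left _
      exact hgeo.comp_injective PNat.coe_injective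
    apply Summable.of_nonneg_of_le (fun i => by positivity) _ hsum
    intro i
    have hb := Gfun_bound t s ht0 hs0 hs1 J (i : ℕ)
    calc ‖g i‖ ^ (2:ℝ≥0∞).toReal = |g i| ^ 2 := by
          rw [hp2, Real.rpow_two, Real.norm_eq_abs]
      _ ≤ (A * s ^ (i : ℕ)) ^ 2 := by
          apply pow_le_pow_left₀ (abs_nonneg _) _ 2
          exact hb
      _ = A ^ 2 * (s ^ 2) ^ (i : ℕ) := by
          rw [mul_pow, ← pow_mul, mul_comm (i : ℕ) 2, pow_mul]
  set gl : lp (fun _ : ℕ+ => ℝ) 2 := ⟨g, hgmem⟩ with hgl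
  have hglapply : ∀ k : ℕ+, gl k = Gfun t s J (k : ℕ) := fun k => rfl
  have hkey : (1 - t⁻¹ • M) gl = lp.single 2 j (1:ℝ) := by
    apply lp.ext
    funext k
    have h1 : ((1 - t⁻¹ • M) gl) k = gl k - t⁻¹ * (M gl) k := by
      rw [ContinuousLinearMap.sub_apply, ContinuousLinearMap.smul_apply,
        ContinuousLinearMap.one_apply, lp.coeFn_sub, Pi.sub_apply, lp.coeFn_smul,
        Pi.smul_apply, smul_eq_mul]
    have h2 : (⇑((1 - t⁻¹ • M) gl) : ∀ _ : ℕ+, ℝ) k = ((lp.single 2 j (1:ℝ)) : ∀ _ : ℕ+, ℝ) k := by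
      rw [h1, hM gl k]
      have hrec := Gfun_rec t s hs0 hs1 hts hJ (n := (k : ℕ)) k.property
      have hc1 : (if 1 < k then gl (k - 1) else 0)
          = (if 1 < (k : ℕ) then Gfun t s J ((k : ℕ) - 1) else 0) := by
        by_cases hk : 1 < k
        · have hkn : 1 < (k : ℕ) := by
            have := (PNat.coe_lt_coe 1 k).mpr hk
            simpa using this
          rw [if_pos hk, if_pos hkn, hglapply]
          congr 1
          rw [PNat.sub_coe, if_pos hk]
          simp
        · have hkn : ¬ 1 < (k : ℕ) := by
            intro h
            exact hk ((PNat.coe_lt_coe 1 k).mp (by simpa using h))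
          rw [if_neg hk, if_neg hkn]
      have hc2 : gl (k + 1) = Gfun t s J ((k : ℕ) + 1) := by
        rw [hglapply]
        congr 1
      have hc3 : ((lp.single 2 j (1:ℝ) : lp (fun _ : ℕ+ => ℝ) 2) : ∀ _ : ℕ+, ℝ) k = if (k : ℕ) = J then 1 else 0 := by
        rcases eq_or_ne k j with hkj | hkj
        · subst hkj
          rw [lp.single_apply_self]
          exact (if_pos rfl).symm
        · rw [lp.single_apply_ne (E := fun _ : ℕ+ => ℝ) 2 j (1:ℝ) hkj, if_neg (by
            intro h
            exact hkj (PNat.coe_injective h))]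
      rw [hc1, hc2, hc3, hglapply]
      exact hrec
    exact h2
  have hBg : (∑' k : ℕ, (t⁻¹ • M) ^ k) (lp.single 2 j (1:ℝ)) = gl := by
    have h := geom_series_mul_neg (t⁻¹ • M) hlt
    have h2 := congrArg
      (fun T : lp (fun _ : ℕ+ => ℝ) 2 →L[ℝ] lp (fun _ : ℕ+ => ℝ) 2 => T gl) h
    simp only [ContinuousLinearMap.mul_apply, ContinuousLinearMap.one_apply] at h2
    rw [hkey] at h2
    exact h2
  rw [hBg, lp.inner_single_left, hdiv]
  simp only [RCLike.inner_apply, conj_trivial, one_mul]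
  have hg1 : gl 1 = Gfun t s J 1 := rfl
  rw [mul_one, hg1, Gfun, max_eq_right hJ, min_eq_left hJ, pow_one, mul_div_assoc, div_self hE,
    mul_one]



end ERpaper
end
end
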